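/- Consider the semi-discrete elasto-acoustic system in algebraic form: real matrices M₁, M₂, M₃, A_e of size n×n and M_a, A_a of size m×m, and a coupling matrix C_e of size n×m, with M₁, M₃, A_e, M_a, A_a symmetric; twice differentiable functions U : [0,T] → ℝⁿ and Φ : [0,T] → ℝᵐ satisfy M₁ Ü(t) + M₂ U̇(t) + (M₃ + A_e) U(t) + C_e Φ̇(t) = F_e(t) and M_a Φ̈(t) + A_a Φ(t) − C_eᵀ U̇(t) = F_a(t) for all t ∈ [0,T], where F_e : [0,T] → ℝⁿ and F_a : [0,T] → ℝᵐ are continuous. Assume in addition that M₁ and M_a are positive definite and M₂, M₃, A_e, A_a are positive semidefinite. Define the energy E(t) = U̇(t)ᵀM₁U̇(t) + U(t)ᵀM₃U(t) + U(t)ᵀA_eU(t) + Φ̇(t)ᵀM_aΦ̇(t) + Φ(t)ᵀA_aΦ(t). Then for every t ∈ [0,T], √E(t) ≤ √E(0) + ∫₀ᵗ ( √(F_e(τ)ᵀ M₁⁻¹ F_e(τ)) + √(F_a(τ)ᵀ M_a⁻¹ F_a(τ)) ) dτ. -/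

import Mathlib

open Set Matrix

lemma hasDerivAt_dotmul {n m : ℕ} (A : Matrix (Fin n) (Fin m) ℝ)
    {x : ℝ → Fin n → ℝ} {y : ℝ → Fin m → ℝ} {x' : Fin n → ℝ} {y' : Fin m → ℝ} {t : ℝ}
    (hx : HasDerivAt x x' t) (hy : HasDerivAt y y' t) :
    HasDerivAt (fun s => x s ⬝ᵥ (A *ᵥ y s)) (x' ⬝ᵥ (A *ᵥ y t) + x t ⬝ᵥ (A *ᵥ y')) t := by
  simp only [dotProduct, mulVec, ← Finset.sum_add_distrib]
  apply HasDerivAt.fun_sum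
  intro i _
  exact ((hasDerivAt_pi.1 hx i).mul
    (HasDerivAt.fun_sum fun j _ => ((hasDerivAt_pi.1 hy j).const_mul (A i j))))

lemma dot_transpose {n m : ℕ} (B : Matrix (Fin n) (Fin m) ℝ) (x : Fin n → ℝ) (y : Fin m → ℝ) :
    x ⬝ᵥ (B *ᵥ y) = y ⬝ᵥ (Bᵀ *ᵥ x) := by
  rw [dotProduct_mulVec, ← mulVec_transpose, dotProduct_comm]

lemma dot_symm {k : ℕ} {A : Matrix (Fin k) (Fin k) ℝ} (hA : A.IsSymm) (x y : Fin k → ℝ) :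
    x ⬝ᵥ (A *ᵥ y) = y ⬝ᵥ (A *ᵥ x) := by
  rw [dot_transpose, hA.eq]

lemma cs_psd {k : ℕ} {A : Matrix (Fin k) (Fin k) ℝ} (hA : A.IsSymm)
    (hpsd : ∀ x : Fin k → ℝ, 0 ≤ x ⬝ᵥ (A *ᵥ x)) (x y : Fin k → ℝ) :
    x ⬝ᵥ (A *ᵥ y) ≤ Real.sqrt (x ⬝ᵥ (A *ᵥ x)) * Real.sqrt (y ⬝ᵥ (A *ᵥ y)) := by
  set a := y ⬝ᵥ (A *ᵥ y)
  set c := x ⬝ᵥ (A *ᵥ x)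
  set s := x ⬝ᵥ (A *ᵥ y)
  have hd : discrim a (2 * s) c ≤ 0 := by
    apply discrim_le_zero
    intro t
    have : a * (t * t) + 2 * s * t + c = (x + t • y) ⬝ᵥ (A *ᵥ (x + t • y)) := by
      simp only [mulVec_add, mulVec_smul, dotProduct_add, add_dotProduct,
        dotProduct_smul, smul_dotProduct, smul_eq_mul]
      rw [dot_symm hA y x]
      ring
    rw [this]; exact hpsd _
  have hsq : s ^ 2 ≤ c * a := by
    simp only [discrim] at hd; nlinarith
  calc s ≤ |s| := le_abs_self s
    _ = Real.sqrt (s ^ 2) := (Real.sqrt_sq_eq_abs s).symm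
    _ ≤ Real.sqrt (c * a) := Real.sqrt_le_sqrt hsq
    _ = Real.sqrt c * Real.sqrt a := Real.sqrt_mul (hpsd x) a

lemma psd_of_pd {k : ℕ} {A : Matrix (Fin k) (Fin k) ℝ} (h : A.PosDef) (x : Fin k → ℝ) :
    0 ≤ x ⬝ᵥ (A *ᵥ x) := by
  have := h.posSemidef.re_dotProduct_nonneg (x := x)
  simpa using this

lemma cs_inv {k : ℕ} {A : Matrix (Fin k) (Fin k) ℝ} (hA : A.IsSymm) (hpd : A.PosDef)
    (x f : Fin k → ℝ) :
    x ⬝ᵥ f ≤ Real.sqrt (x ⬝ᵥ (A *ᵥ x)) * Real.sqrt (f ⬝ᵥ (A⁻¹ *ᵥ f)) := by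
  have hdet : IsUnit A.det := isUnit_iff_ne_zero.2 (ne_of_gt hpd.det_pos)
  have hinv : A *ᵥ (A⁻¹ *ᵥ f) = f := by
    rw [mulVec_mulVec, Matrix.mul_nonsing_inv _ hdet, one_mulVec]
  have h1 : x ⬝ᵥ f = x ⬝ᵥ (A *ᵥ (A⁻¹ *ᵥ f)) := by rw [hinv]
  have h2 : (A⁻¹ *ᵥ f) ⬝ᵥ (A *ᵥ (A⁻¹ *ᵥ f)) = f ⬝ᵥ (A⁻¹ *ᵥ f) := by
    rw [hinv, dotProduct_comm]
  calc x ⬝ᵥ f = x ⬝ᵥ (A *ᵥ (A⁻¹ *ᵥ f)) := h1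
    _ ≤ Real.sqrt (x ⬝ᵥ (A *ᵥ x)) * Real.sqrt ((A⁻¹ *ᵥ f) ⬝ᵥ (A *ᵥ (A⁻¹ *ᵥ f))) :=
        cs_psd hA (psd_of_pd hpd) _ _
    _ = _ := by rw [h2]

/-- Stability estimate for the semi-discrete elasto-acoustic
system: with `E(t) = U̇ᵀM₁U̇ + UᵀM₃U + UᵀA_eU + Φ̇ᵀM_aΦ̇ + ΦᵀA_aΦ`, positive
definite mass matrices `M₁`, `M_a` and positive semidefinite `M₂, M₃, A_e, A_a`,
one has `√E(t) ≤ √E(0) + ∫₀ᵗ (√(F_eᵀM₁⁻¹F_e) + √(F_aᵀM_a⁻¹F_a)) dτ`. -/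
theorem semidiscrete_stability
    {n m : ℕ} (T : ℝ) (hT : 0 < T)
    (M₁ M₂ M₃ Ae : Matrix (Fin n) (Fin n) ℝ)
    (Ma Aa : Matrix (Fin m) (Fin m) ℝ)
    (Ce : Matrix (Fin n) (Fin m) ℝ)
    (hM₁ : M₁.IsSymm) (hM₃ : M₃.IsSymm) (hAe : Ae.IsSymm)
    (hMa : Ma.IsSymm) (hAa : Aa.IsSymm)
    (hM₁pd : M₁.PosDef) (hMapd : Ma.PosDef)
    (hM₂psd : ∀ x : Fin n → ℝ, 0 ≤ x ⬝ᵥ (M₂ *ᵥ x))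
    (hM₃psd : ∀ x : Fin n → ℝ, 0 ≤ x ⬝ᵥ (M₃ *ᵥ x))
    (hAepsd : ∀ x : Fin n → ℝ, 0 ≤ x ⬝ᵥ (Ae *ᵥ x))
    (hAapsd : ∀ y : Fin m → ℝ, 0 ≤ y ⬝ᵥ (Aa *ᵥ y))
    (Fe : ℝ → Fin n → ℝ) (Fa : ℝ → Fin m → ℝ)
    (hFe : Continuous Fe) (hFa : Continuous Fa)
    (U U' U'' : ℝ → Fin n → ℝ) (Φ Φ' Φ'' : ℝ → Fin m → ℝ)
    (hU' : ∀ t ∈ Icc (0 : ℝ) T, HasDerivAt U (U' t) t)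
    (hU'' : ∀ t ∈ Icc (0 : ℝ) T, HasDerivAt U' (U'' t) t)
    (hΦ' : ∀ t ∈ Icc (0 : ℝ) T, HasDerivAt Φ (Φ' t) t)
    (hΦ'' : ∀ t ∈ Icc (0 : ℝ) T, HasDerivAt Φ' (Φ'' t) t)
    (hode₁ : ∀ t ∈ Icc (0 : ℝ) T,
      M₁ *ᵥ U'' t + M₂ *ᵥ U' t + (M₃ + Ae) *ᵥ U t + Ce *ᵥ Φ' t = Fe t)
    (hode₂ : ∀ t ∈ Icc (0 : ℝ) T,
      Ma *ᵥ Φ'' t + Aa *ᵥ Φ t - Ceᵀ *ᵥ U' t = Fa t)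
    (E : ℝ → ℝ)
    (hE : ∀ s, E s =
      U' s ⬝ᵥ (M₁ *ᵥ U' s) + U s ⬝ᵥ (M₃ *ᵥ U s) + U s ⬝ᵥ (Ae *ᵥ U s)
        + Φ' s ⬝ᵥ (Ma *ᵥ Φ' s) + Φ s ⬝ᵥ (Aa *ᵥ Φ s)) :
    ∀ t ∈ Icc (0 : ℝ) T,
      Real.sqrt (E t) ≤ Real.sqrt (E 0)
        + ∫ τ in (0 : ℝ)..t,
            (Real.sqrt (Fe τ ⬝ᵥ (M₁⁻¹ *ᵥ Fe τ)) + Real.sqrt (Fa τ ⬝ᵥ (Ma⁻¹ *ᵥ Fa τ))) := by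
  intro t ht
  set g : ℝ → ℝ :=
    fun τ => Real.sqrt (Fe τ ⬝ᵥ (M₁⁻¹ *ᵥ Fe τ)) + Real.sqrt (Fa τ ⬝ᵥ (Ma⁻¹ *ᵥ Fa τ)) with hg
  -- continuity of g
  have hge : Continuous fun τ => Fe τ ⬝ᵥ (M₁⁻¹ *ᵥ Fe τ) := by
    simp only [dotProduct, mulVec]
    exact continuous_finset_sum _ fun i _ =>
      ((continuous_apply i).comp hFe).mul (continuous_finset_sum _ fun j _ =>
        continuous_const.mul ((continuous_apply j).comp hFe))
  have hga : Continuous fun τ => Fa τ ⬝ᵥ (Ma⁻¹ *ᵥ Fa τ) := by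
    simp only [dotProduct, mulVec]
    exact continuous_finset_sum _ fun i _ =>
      ((continuous_apply i).comp hFa).mul (continuous_finset_sum _ fun j _ =>
        continuous_const.mul ((continuous_apply j).comp hFa))
  have hgc : Continuous g := (Real.continuous_sqrt.comp hge).add (Real.continuous_sqrt.comp hga)
  have hgnn : ∀ τ, 0 ≤ g τ := fun τ => add_nonneg (Real.sqrt_nonneg _) (Real.sqrt_nonneg _)
  -- E nonneg
  have hEnn : ∀ s, 0 ≤ E s := by
    intro s
    rw [hE]
    have h1 := psd_of_pd hM₁pd (U' s)
    have h2 := hM₃psd (U s)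
    have h3 := hAepsd (U s)
    have h4 := psd_of_pd hMapd (Φ' s)
    have h5 := hAapsd (Φ s)
    linarith
  -- derivative of E
  set D : ℝ → ℝ := fun s =>
    2 * (U' s ⬝ᵥ Fe s) + 2 * (Φ' s ⬝ᵥ Fa s) - 2 * (U' s ⬝ᵥ (M₂ *ᵥ U' s)) with hD
  have hEfun : E = fun s =>
      U' s ⬝ᵥ (M₁ *ᵥ U' s) + U s ⬝ᵥ (M₃ *ᵥ U s) + U s ⬝ᵥ (Ae *ᵥ U s)
        + Φ' s ⬝ᵥ (Ma *ᵥ Φ' s) + Φ s ⬝ᵥ (Aa *ᵥ Φ s) := funext hE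
  have hEderiv : ∀ s ∈ Icc (0 : ℝ) T, HasDerivAt E (D s) s := by
    intro s hs
    rw [hEfun]
    have h1 := hasDerivAt_dotmul M₁ (hU'' s hs) (hU'' s hs)
    have h2 := hasDerivAt_dotmul M₃ (hU' s hs) (hU' s hs)
    have h3 := hasDerivAt_dotmul Ae (hU' s hs) (hU' s hs)
    have h4 := hasDerivAt_dotmul Ma (hΦ'' s hs) (hΦ'' s hs)
    have h5 := hasDerivAt_dotmul Aa (hΦ' s hs) (hΦ' s hs)
    have hraw := (((h1.add h2).add h3).add h4).add h5
    refine hraw.congr_deriv ?_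
    have e1 := congrArg (fun v => U' s ⬝ᵥ v) (hode₁ s hs)
    have e2 := congrArg (fun v => Φ' s ⬝ᵥ v) (hode₂ s hs)
    simp only [dotProduct_add, dotProduct_sub, add_mulVec] at e1 e2
    have s1 : U'' s ⬝ᵥ (M₁ *ᵥ U' s) = U' s ⬝ᵥ (M₁ *ᵥ U'' s) := dot_symm hM₁ _ _
    have s2 : U s ⬝ᵥ (M₃ *ᵥ U' s) = U' s ⬝ᵥ (M₃ *ᵥ U s) := dot_symm hM₃ _ _
    have s3 : U s ⬝ᵥ (Ae *ᵥ U' s) = U' s ⬝ᵥ (Ae *ᵥ U s) := dot_symm hAe _ _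
    have s4 : Φ'' s ⬝ᵥ (Ma *ᵥ Φ' s) = Φ' s ⬝ᵥ (Ma *ᵥ Φ'' s) := dot_symm hMa _ _
    have s5 : Φ s ⬝ᵥ (Aa *ᵥ Φ' s) = Φ' s ⬝ᵥ (Aa *ᵥ Φ s) := dot_symm hAa _ _
    have cx : U' s ⬝ᵥ (Ce *ᵥ Φ' s) = Φ' s ⬝ᵥ (Ceᵀ *ᵥ U' s) := dot_transpose _ _ _
    simp only [hD]
    linarith
  -- the key bound: D s ≤ 2 √(E s) g s
  have hbound : ∀ s, D s ≤ 2 * Real.sqrt (E s) * g s := by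
    intro s
    have hle1 : U' s ⬝ᵥ (M₁ *ᵥ U' s) ≤ E s := by
      rw [hE]
      have h2 := hM₃psd (U s); have h3 := hAepsd (U s)
      have h4 := psd_of_pd hMapd (Φ' s); have h5 := hAapsd (Φ s)
      linarith
    have hle2 : Φ' s ⬝ᵥ (Ma *ᵥ Φ' s) ≤ E s := by
      rw [hE]
      have h1 := psd_of_pd hM₁pd (U' s); have h2 := hM₃psd (U s)
      have h3 := hAepsd (U s); have h5 := hAapsd (Φ s)
      linarith
    have hb1 : U' s ⬝ᵥ Fe s ≤ Real.sqrt (E s) * Real.sqrt (Fe s ⬝ᵥ (M₁⁻¹ *ᵥ Fe s)) :=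
      le_trans (cs_inv hM₁ hM₁pd _ _)
        (mul_le_mul_of_nonneg_right (Real.sqrt_le_sqrt hle1) (Real.sqrt_nonneg _))
    have hb2 : Φ' s ⬝ᵥ Fa s ≤ Real.sqrt (E s) * Real.sqrt (Fa s ⬝ᵥ (Ma⁻¹ *ᵥ Fa s)) :=
      le_trans (cs_inv hMa hMapd _ _)
        (mul_le_mul_of_nonneg_right (Real.sqrt_le_sqrt hle2) (Real.sqrt_nonneg _))
    have hm2 := hM₂psd (U' s)
    have hexp : 2 * Real.sqrt (E s) * g s
        = 2 * (Real.sqrt (E s) * Real.sqrt (Fe s ⬝ᵥ (M₁⁻¹ *ᵥ Fe s)))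
          + 2 * (Real.sqrt (E s) * Real.sqrt (Fa s ⬝ᵥ (Ma⁻¹ *ᵥ Fa s))) := by
      rw [hg]; ring
    rw [hD, hexp]
    linarith
  -- ε-regularized Gronwall
  have key : ∀ ε : ℝ, 0 < ε →
      Real.sqrt (E t + ε) ≤ Real.sqrt (E 0 + ε) + ∫ τ in (0 : ℝ)..t, g τ := by
    intro ε hε
    have hEpos : ∀ s, 0 < E s + ε := fun s => add_pos_of_nonneg_of_pos (hEnn s) hε
    set h : ℝ → ℝ := fun s => Real.sqrt (E s + ε) - ∫ τ in (0 : ℝ)..s, g τ with hh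
    have hhd : ∀ s ∈ Icc (0 : ℝ) T,
        HasDerivAt h (1 / (2 * Real.sqrt (E s + ε)) * D s - g s) s := by
      intro s hs
      have h1 : HasDerivAt (fun s => E s + ε) (D s) s := (hEderiv s hs).add_const ε
      have h2 : HasDerivAt (fun s => Real.sqrt (E s + ε))
          (1 / (2 * Real.sqrt (E s + ε)) * D s) s :=
        (Real.hasDerivAt_sqrt (ne_of_gt (hEpos s))).comp s h1
      have h3 : HasDerivAt (fun s => ∫ τ in (0 : ℝ)..s, g τ) (g s) s :=
        intervalIntegral.integral_hasDerivAt_right (hgc.intervalIntegrable _ _)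
          hgc.stronglyMeasurable.stronglyMeasurableAtFilter hgc.continuousAt
      exact h2.sub h3
    have hmono : AntitoneOn h (Icc (0 : ℝ) T) := by
      apply antitoneOn_of_deriv_nonpos (convex_Icc 0 T)
      · intro s hs
        exact (hhd s hs).continuousAt.continuousWithinAt
      · intro s hs
        rw [interior_Icc] at hs
        exact (hhd s (Ioo_subset_Icc_self hs)).differentiableAt.differentiableWithinAt
      · intro s hs
        rw [interior_Icc] at hs
        rw [(hhd s (Ioo_subset_Icc_self hs)).deriv]
        have hb : D s ≤ 2 * Real.sqrt (E s + ε) * g s := by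
          refine le_trans (hbound s) ?_
          exact mul_le_mul_of_nonneg_right
            (by
              have := Real.sqrt_le_sqrt (show E s ≤ E s + ε by linarith)
              linarith) (hgnn s)
        have hp : 0 < 2 * Real.sqrt (E s + ε) := by
          have := Real.sqrt_pos.2 (hEpos s)
          linarith
        rw [sub_nonpos, one_div, inv_mul_le_iff₀ hp]
        exact hb
    have h0mem : (0 : ℝ) ∈ Icc (0 : ℝ) T := ⟨le_refl 0, le_of_lt hT⟩
    have := hmono h0mem ht ht.1
    rw [hh] at this
    simp only [intervalIntegral.integral_same] at this
    linarith
  -- pass to the limit ε → 0⁺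
  have hlim : Filter.Tendsto (fun ε : ℝ => Real.sqrt (E 0 + ε) + ∫ τ in (0 : ℝ)..t, g τ)
      (nhdsWithin 0 (Ioi 0)) (nhds (Real.sqrt (E 0) + ∫ τ in (0 : ℝ)..t, g τ)) := by
    have hc : ContinuousAt (fun ε : ℝ => Real.sqrt (E 0 + ε) + ∫ τ in (0 : ℝ)..t, g τ) 0 :=
      ContinuousAt.add
        (Real.continuous_sqrt.continuousAt.comp ((continuous_const.add continuous_id).continuousAt))
        continuousAt_const
    have h2 : Filter.Tendsto (fun ε : ℝ => Real.sqrt (E 0 + ε) + ∫ τ in (0 : ℝ)..t, g τ)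
        (nhdsWithin 0 (Ioi 0)) (nhds (Real.sqrt (E 0 + 0) + ∫ τ in (0 : ℝ)..t, g τ)) :=
      hc.tendsto.mono_left nhdsWithin_le_nhds
    simpa using h2
  refine ge_of_tendsto hlim ?_
  filter_upwards [self_mem_nhdsWithin] with ε hε
  calc Real.sqrt (E t) ≤ Real.sqrt (E t + ε) :=
        Real.sqrt_le_sqrt (by simp only [mem_Ioi] at hε; linarith)
    _ ≤ _ := key ε hε
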